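/- arXiv:1904.04080 — 2 statements merged into one kernel-verified Lean document; each statement's English description precedes it below -/
import Mathlib

section
/- Let $\mathcal{G}$ forbid a monochromatic chain of every color and let $\overline{\beta}$ be positive weights. Then the maximum of $\omega(\overline{\beta}, T)$ over all valid templates $T$ on $\mathcal{P}([n])$ is attained by a valid template $T$ such that $T(x)$ depends only on $|x|$ and $\mathrm{Supp}(T)$ is a union of at most $L(\mathcal{G})$ consecutive layers of $\mathcal{P}([n])$; moreover this maximum satisfies $\max_T \omega(\overline{\beta}, T) \leq \omega_{crit}(\overline{\beta}) \binom{n}{\lfloor n/2 \rfloor}$ and $\max_T \omega(\overline{\beta}, T) \geq \omega_{crit}(\overline{\beta}) (1 - O(1/n)) \binom{n}{\lfloor n/2 \rfloor}$. -/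
open Finset

/-- `𝒢` forbids a monochromatic chain of every color. -/
def Sparse (m : ℕ) (G : Set (List (Fin m))) : Prop :=
  ∀ i : Fin m, ∃ k, 1 ≤ k ∧ List.replicate k i ∈ G

/-- A valid template supported on a chain poset (modeled as `ℕ`). -/
def ValidChainTemplate {m : ℕ} (G : Set (List (Fin m))) (t : ℕ → Finset (Fin m)) : Prop :=
  {j | t j ≠ ∅}.Finite ∧
    ∀ c : ℕ → Fin m, (∀ j, t j ≠ ∅ → c j ∈ t j) →
      ¬ ∃ l : List ℕ, l.Chain' (· < ·) ∧ (∀ j ∈ l, t j ≠ ∅) ∧ l.map c ∈ G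

noncomputable def omegaChain {m : ℕ} (β : Fin m → ℝ) (t : ℕ → Finset (Fin m)) : ℝ :=
  ∑ᶠ j : ℕ, Real.log (1 + ∑ i ∈ t j, β i)

noncomputable def omegaCrit {m : ℕ} (β : Fin m → ℝ) (G : Set (List (Fin m))) : ℝ :=
  sSup {w | ∃ t, ValidChainTemplate G t ∧ w = omegaChain β t}

/-- A valid template on `𝒫([n])`. -/
def ValidTemplate {n m : ℕ} (G : Set (List (Fin m)))
    (T : Finset (Fin n) → Finset (Fin m)) : Prop :=
  ∀ c : Finset (Fin n) → Fin m, (∀ x, T x ≠ ∅ → c x ∈ T x) →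
    ¬ ∃ l : List (Finset (Fin n)), l.Chain' (· ⊂ ·) ∧ (∀ x ∈ l, T x ≠ ∅) ∧ l.map c ∈ G


/-! ### Auxiliary machinery -/

section Helpers

variable {m : ℕ}

noncomputable def logw (β : Fin m → ℝ) (u : Finset (Fin m)) : ℝ :=
  Real.log (1 + ∑ i ∈ u, β i)

lemma logw_empty (β : Fin m → ℝ) : logw β ∅ = 0 := by simp [logw]

lemma logw_nonneg {β : Fin m → ℝ} (hβ : ∀ i, 0 < β i) (u : Finset (Fin m)) : 0 ≤ logw β u := by
  have : (0:ℝ) ≤ ∑ i ∈ u, β i := Finset.sum_nonneg fun i _ => (hβ i).le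
  exact Real.log_nonneg (by linarith)

lemma logw_le {β : Fin m → ℝ} (hβ : ∀ i, 0 < β i) (u : Finset (Fin m)) :
    logw β u ≤ Real.log (1 + ∑ i : Fin m, β i) := by
  have h1 : (0:ℝ) ≤ ∑ i ∈ u, β i := Finset.sum_nonneg fun i _ => (hβ i).le
  have h2 : ∑ i ∈ u, β i ≤ ∑ i : Fin m, β i :=
    Finset.sum_le_sum_of_subset_of_nonneg (Finset.subset_univ u) fun i _ _ => (hβ i).le
  exact Real.log_le_log (by linarith) (by linarith)

/-- The initial-segment set of `Fin n`. -/
def Xset (n j : ℕ) : Finset (Fin n) := univ.filter (fun i : Fin n => (i : ℕ) < j)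

lemma card_Xset {n j : ℕ} (h : j ≤ n) : (Xset n j).card = j := by
  have hattach : Xset n j = Finset.attachFin (Finset.range j)
      (fun m hm => lt_of_lt_of_le (Finset.mem_range.mp hm) h) := by
    ext i
    simp [Xset, Finset.mem_attachFin]
  rw [hattach, Finset.card_attachFin, Finset.card_range]

lemma Xset_ssubset {n j j' : ℕ} (hlt : j < j') (h : j' ≤ n) : Xset n j ⊂ Xset n j' := by
  have hsub : Xset n j ⊆ Xset n j' := by
    intro i hi
    simp only [Xset, Finset.mem_filter] at hi ⊢
    exact ⟨hi.1, lt_of_lt_of_le hi.2 (le_of_lt hlt)⟩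
  have hcard : (Xset n j).card < (Xset n j').card := by
    rw [card_Xset (le_trans (le_of_lt hlt) h), card_Xset h]
    omega
  exact ⟨hsub, fun hsub' => absurd (Finset.card_le_card hsub') (not_le.mpr hcard)⟩

lemma card_le_n {n : ℕ} (x : Finset (Fin n)) : x.card ≤ n := by
  simpa using Finset.card_le_univ x

/-- Summing a function of the cardinality over all subsets. -/
lemma sum_card_eq {n : ℕ} (g : ℕ → ℝ) :
    ∑ x : Finset (Fin n), g x.card
      = ∑ j ∈ Finset.range (n+1), (n.choose j : ℝ) * g j := by
  classical
  rw [← Finset.sum_fiberwise_of_maps_to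
    (fun (x : Finset (Fin n)) (_ : x ∈ univ) =>
      Finset.mem_range.mpr (Nat.lt_succ_of_le (card_le_n x)))
    (fun x => g x.card)]
  refine Finset.sum_congr rfl fun j hj => ?_
  have hfil : (univ : Finset (Finset (Fin n))).filter (fun x => x.card = j)
      = Finset.powersetCard j univ := by
    ext x; simp [Finset.mem_powersetCard_univ]
  rw [Finset.sum_congr rfl (fun x hx => by
      rw [(Finset.mem_filter.mp hx).2]),
    Finset.sum_const, hfil, Finset.card_powersetCard, Finset.card_univ, Fintype.card_fin,
    nsmul_eq_mul]

variable {n : ℕ} {G : Set (List (Fin m))}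

instance : IsTrans (Finset (Fin n)) (· ⊂ ·) :=
  ⟨fun _ _ _ h1 h2 => h1.trans h2⟩

/-- Restriction of a valid template to a chain of sets. -/
lemma valid_chain_of_chain {T : Finset (Fin n) → Finset (Fin m)} (hT : ValidTemplate G T)
    (Y : ℕ → Finset (Fin n))
    (hYc : ∀ j, j ≤ n → (Y j).card = j)
    (hYs : ∀ j j', j < j' → j' ≤ n → Y j ⊂ Y j') :
    ValidChainTemplate G (fun j => if j ≤ n then T (Y j) else ∅) := by
  classical
  constructor
  · refine (Set.finite_Iic n).subset fun j hj => ?_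
    simp only [Set.mem_setOf_eq] at hj
    by_contra hc
    simp only [Set.mem_Iic, not_le] at hc
    exact hj (if_neg (not_le.mpr hc))
  · rintro c' hc' ⟨l, hchain, hsupp, hmem⟩
    have hc'2 : ∀ j, (if j ≤ n then T (Y j) else ∅) ≠ ∅ →
        c' j ∈ (if j ≤ n then T (Y j) else ∅) := hc'
    have hsupp2 : ∀ j ∈ l, (if j ≤ n then T (Y j) else ∅) ≠ ∅ := hsupp
    have hl : ∀ j ∈ l, j ≤ n ∧ T (Y j) ≠ ∅ := by
      intro j hj
      have := hsupp2 j hj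
      by_cases h : j ≤ n
      · rw [if_pos h] at this; exact ⟨h, this⟩
      · rw [if_neg h] at this; exact absurd rfl this
    set c : Finset (Fin n) → Fin m := fun x =>
      if x = Y x.card then c' x.card
      else if h : (T x).Nonempty then h.choose else c' 0 with hc
    have hccond : ∀ x, T x ≠ ∅ → c x ∈ T x := by
      intro x hx
      by_cases h : x = Y x.card
      · have hcard : x.card ≤ n := by simpa using Finset.card_le_univ x
        have : (if x.card ≤ n then T (Y x.card) else ∅) ≠ ∅ := by
          rw [if_pos hcard, ← h]; exact hx
        have hmem' := hc'2 x.card this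
        rw [if_pos hcard, ← h] at hmem'
        simp only [hc, if_pos h]
        exact hmem'
      · simp only [hc, if_neg h]
        have hne : (T x).Nonempty := Finset.nonempty_iff_ne_empty.mpr hx
        rw [dif_pos hne]
        exact hne.choose_spec
    refine hT c hccond ⟨l.map Y, ?_, ?_, ?_⟩
    · refine List.isChain_iff_pairwise.mpr ?_; rw [List.pairwise_map]
      refine (List.isChain_iff_pairwise.mp hchain).imp_of_mem ?_
      intro a b ha hb hab
      exact hYs a b hab (hl b hb).1
    · intro x hx
      obtain ⟨j, hj, rfl⟩ := List.mem_map.mp hx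
      exact (hl j hj).2
    · rw [List.map_map]
      have : ∀ j ∈ l, (c ∘ Y) j = c' j := by
        intro j hj
        have hcard : (Y j).card = j := hYc j (hl j hj).1
        simp only [Function.comp_apply, hc]
        rw [if_pos (by rw [hcard]), hcard]
      rw [List.map_congr_left this]
      exact hmem

/-- A valid chain template induces a valid layered template on `𝒫([n])`. -/
lemma validTemplate_of_chainTemplate {t : ℕ → Finset (Fin m)}
    (ht : ValidChainTemplate G t) :
    ValidTemplate G (fun x : Finset (Fin n) => t x.card) := by
  classical
  rintro c hcc ⟨l, hchain, hsupp, hmem⟩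
  have hcc2 : ∀ x : Finset (Fin n), t x.card ≠ ∅ → c x ∈ t x.card := hcc
  have hsupp2 : ∀ x ∈ l, t x.card ≠ ∅ := hsupp
  have hp : l.Pairwise (· ⊂ ·) := List.isChain_iff_pairwise.mp hchain
  have hcards : l.Pairwise (fun a b => a.card < b.card) :=
    hp.imp fun h => Finset.card_lt_card h
  have hnodup : (l.map Finset.card).Nodup :=
    (List.pairwise_map.mpr hcards).imp fun h => Nat.ne_of_lt h
  have hinj : ∀ x ∈ l, ∀ y ∈ l, x.card = y.card → x = y :=
    List.inj_on_of_nodup_map hnodup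
  set c' : ℕ → Fin m := fun j =>
    if h : ∃ x, x ∈ l ∧ x.card = j then c h.choose
    else if h2 : (t j).Nonempty then h2.choose else c ∅ with hc'
  have hcond : ∀ j, t j ≠ ∅ → c' j ∈ t j := by
    intro j hj
    by_cases h : ∃ x, x ∈ l ∧ x.card = j
    · simp only [hc', dif_pos h]
      have hx := h.choose_spec
      have := hcc2 h.choose (by rw [hx.2]; exact hj)
      rw [hx.2] at this
      exact this
    · simp only [hc', dif_neg h]
      have hne : (t j).Nonempty := Finset.nonempty_iff_ne_empty.mpr hj
      rw [dif_pos hne]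
      exact hne.choose_spec
  refine ht.2 c' hcond ⟨l.map Finset.card, ?_, ?_, ?_⟩
  · refine List.isChain_iff_pairwise.mpr ?_; rw [List.pairwise_map]
    exact hcards
  · intro j hj
    obtain ⟨x, hx, rfl⟩ := List.mem_map.mp hj
    exact hsupp2 x hx
  · rw [List.map_map]
    have : ∀ x ∈ l, (c' ∘ Finset.card) x = c x := by
      intro x hx
      have h : ∃ y, y ∈ l ∧ y.card = x.card := ⟨x, hx, rfl⟩
      simp only [Function.comp_apply, hc', dif_pos h]
      have hy := h.choose_spec
      rw [hinj _ hy.1 _ hx hy.2]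
    rw [List.map_congr_left this]
    exact hmem

open Classical in
/-- A chain template given by positions `pos` and values `v`. -/
noncomputable def mkT {m k : ℕ} (pos : Fin k → ℕ) (v : Fin k → Finset (Fin m)) :
    ℕ → Finset (Fin m) :=
  fun j => if h : ∃ r, pos r = j then v h.choose else ∅

lemma mkT_pos {k : ℕ} {pos : Fin k → ℕ} (hinj : Function.Injective pos)
    (v : Fin k → Finset (Fin m)) (r : Fin k) : mkT pos v (pos r) = v r := by
  have h : ∃ r', pos r' = pos r := ⟨r, rfl⟩
  rw [mkT, dif_pos h, hinj h.choose_spec]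

lemma mkT_support {k : ℕ} {pos : Fin k → ℕ} {v : Fin k → Finset (Fin m)} {j : ℕ}
    (h : mkT pos v j ≠ ∅) : ∃ r, pos r = j ∧ v r ≠ ∅ := by
  rw [mkT] at h
  by_cases h2 : ∃ r, pos r = j
  · rw [dif_pos h2] at h
    exact ⟨h2.choose, h2.choose_spec, h⟩
  · rw [dif_neg h2] at h
    exact absurd rfl h

lemma mkT_finite {k : ℕ} (pos : Fin k → ℕ) (v : Fin k → Finset (Fin m)) :
    {j | mkT pos v j ≠ ∅}.Finite := by
  refine (Set.finite_range pos).subset fun j hj => ?_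
  obtain ⟨r, hr, _⟩ := mkT_support hj
  exact ⟨r, hr⟩

/-- Validity is invariant under strictly monotone relabelling of positions. -/
lemma mkT_valid_relabel {k : ℕ} {pos pos' : Fin k → ℕ} (hp : StrictMono pos)
    (hp' : StrictMono pos') {v : Fin k → Finset (Fin m)}
    (hv : ValidChainTemplate G (mkT pos v)) : ValidChainTemplate G (mkT pos' v) := by
  classical
  refine ⟨mkT_finite pos' v, ?_⟩
  rintro c' hc' ⟨l, hchain, hsupp, hmem⟩
  set c : ℕ → Fin m := fun j =>
    if h : ∃ r, pos r = j then c' (pos' h.choose)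
    else if h2 : (mkT pos v j).Nonempty then h2.choose else c' 0 with hcdef
  have hccond : ∀ j, mkT pos v j ≠ ∅ → c j ∈ mkT pos v j := by
    intro j hj
    by_cases h : ∃ r, pos r = j
    · simp only [hcdef, dif_pos h]
      set r := h.choose with hrdef
      have hr : pos r = j := h.choose_spec
      have hval : mkT pos v j = v r := by rw [← hr, mkT_pos hp.injective]
      have hval' : mkT pos' v (pos' r) = v r := mkT_pos hp'.injective v r
      have := hc' (pos' r) (by rw [hval']; rw [hval] at hj; exact hj)
      rw [hval'] at this
      rw [hval]
      exact this
    · exfalso; rw [mkT, dif_neg h] at hj; exact hj rfl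
  set g : ℕ → ℕ := fun j => if h : ∃ r, pos' r = j then pos h.choose else 0 with hgdef
  have hkey : ∀ j ∈ l, ∀ r : Fin k, pos' r = j →
      g j = pos r ∧ c (g j) = c' j ∧ mkT pos v (g j) = v r := by
    intro j hj r hr
    have h : ∃ r', pos' r' = j := ⟨r, hr⟩
    have hre : h.choose = r := hp'.injective (h.choose_spec.trans hr.symm)
    have hg : g j = pos r := by rw [hgdef]; simp only [dif_pos h, hre]
    have hval : mkT pos v (g j) = v r := by rw [hg]; exact mkT_pos hp.injective v r
    refine ⟨hg, ?_, hval⟩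
    have h2 : ∃ r', pos r' = g j := ⟨r, hg.symm⟩
    have hre2 : h2.choose = r := hp.injective (h2.choose_spec.trans hg)
    rw [hcdef]
    simp only [dif_pos h2, hre2, hr]
  have hwit : ∀ j ∈ l, ∃ r : Fin k, pos' r = j ∧ v r ≠ ∅ := fun j hj =>
    mkT_support (hsupp j hj)
  refine hv.2 c hccond ⟨l.map g, ?_, ?_, ?_⟩
  · refine List.isChain_iff_pairwise.mpr ?_; rw [List.pairwise_map]
    refine (List.isChain_iff_pairwise.mp hchain).imp_of_mem ?_
    intro a b ha hb hab
    obtain ⟨ra, hra, _⟩ := hwit a ha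
    obtain ⟨rb, hrb, _⟩ := hwit b hb
    rw [(hkey a ha ra hra).1, (hkey b hb rb hrb).1]
    exact hp (hp'.lt_iff_lt.mp (by rw [hra, hrb]; exact hab))
  · intro j hj
    obtain ⟨j', hj', rfl⟩ := List.mem_map.mp hj
    obtain ⟨r, hr, hvr⟩ := hwit j' hj'
    rw [(hkey j' hj' r hr).2.2]
    exact hvr
  · rw [List.map_map]
    rw [List.map_congr_left (fun j hj => ?_)]
    · exact hmem
    · obtain ⟨r, hr, _⟩ := hwit j hj
      exact (hkey j hj r hr).2.1

/-- Enumerate the support of a finitely supported chain template. -/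
lemma exists_enum {t : ℕ → Finset (Fin m)} (ht : {j | t j ≠ ∅}.Finite) :
    ∃ (k : ℕ) (pos : Fin k → ℕ), StrictMono pos ∧ mkT pos (t ∘ pos) = t ∧
      k = {j | t j ≠ ∅}.ncard ∧ (∀ r, t (pos r) ≠ ∅) := by
  classical
  let e := ht.toFinset.orderIsoOfFin rfl
  have hmem : ∀ r, t ((e r : ℕ)) ≠ ∅ := by
    intro r
    have := (e r).2
    rwa [Set.Finite.mem_toFinset] at this
  refine ⟨ht.toFinset.card, fun r => (e r : ℕ), fun a b hab => ?_, ?_, ?_, hmem⟩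
  · exact Subtype.coe_lt_coe.mpr (e.lt_iff_lt.mpr hab)
  · funext j
    by_cases hj : t j ≠ ∅
    · have hjF : j ∈ ht.toFinset := ht.mem_toFinset.mpr hj
      have h : ∃ r, ((e r : ℕ)) = j := ⟨e.symm ⟨j, hjF⟩, by simp⟩
      rw [mkT, dif_pos h]
      simp only [Function.comp_apply]
      rw [h.choose_spec]
    · push_neg at hj
      have h : ¬ ∃ r, ((e r : ℕ)) = j := by
        rintro ⟨r, hr⟩
        exact hmem r (by rw [hr]; exact hj)
      rw [mkT, dif_neg h, hj]
  · rw [Set.ncard_eq_toFinset_card _ ht]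

/-- Gap lemma for strictly monotone functions from `Fin k`. -/
lemma strictMono_gap {k : ℕ} {pos : Fin k → ℕ} (h : StrictMono pos) :
    ∀ d : ℕ, ∀ r s : Fin k, (r : ℕ) + d = (s : ℕ) → pos r + d ≤ pos s := by
  intro d
  induction d with
  | zero =>
    intro r s hrs
    have : r = s := Fin.ext (by omega)
    simp [this]
  | succ d ih =>
    intro r s hrs
    have hs1 : (s : ℕ) - 1 < k := by omega
    have h1 : pos r + d ≤ pos ⟨(s : ℕ) - 1, hs1⟩ :=
      ih r ⟨(s : ℕ) - 1, hs1⟩ (by simp only [Fin.val_mk]; omega)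
    have h2 : pos ⟨(s : ℕ) - 1, hs1⟩ < pos s :=
      h (by rw [Fin.lt_def]; simp only [Fin.val_mk]; omega)
    omega

lemma strictMono_ge {k : ℕ} {pos : Fin k → ℕ} (h : StrictMono pos) (r : Fin k) :
    (r : ℕ) ≤ pos r := by
  have := strictMono_gap h (r : ℕ) ⟨0, lt_of_le_of_lt (Nat.zero_le _) r.isLt⟩ r (by simp)
  omega

/-- A downward-closed subset of `Fin k` is an initial segment. -/
lemma downward_closed_iff {k : ℕ} {Q : Finset (Fin k)}
    (hdc : ∀ r s : Fin k, r ≤ s → s ∈ Q → r ∈ Q) (r : Fin k) :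
    r ∈ Q ↔ (r : ℕ) < Q.card := by
  constructor
  · intro hr
    have hsub : univ.filter (fun s : Fin k => (s : ℕ) < (r : ℕ) + 1) ⊆ Q := by
      intro s hs
      simp only [Finset.mem_filter] at hs
      exact hdc s r (by rw [Fin.le_def]; omega) hr
    have hcard : (univ.filter (fun s : Fin k => (s : ℕ) < (r : ℕ) + 1)).card = (r : ℕ) + 1 := by
      have : univ.filter (fun s : Fin k => (s : ℕ) < (r : ℕ) + 1)
          = Finset.attachFin (Finset.range ((r : ℕ) + 1))
            (fun m hm => lt_of_lt_of_le (Finset.mem_range.mp hm) (by omega)) := by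
        ext i; simp [Finset.mem_attachFin]
      rw [this, Finset.card_attachFin, Finset.card_range]
    have := Finset.card_le_card hsub
    omega
  · intro hr
    by_contra hnr
    have hsub : Q ⊆ univ.filter (fun s : Fin k => (s : ℕ) < (r : ℕ)) := by
      intro s hs
      simp only [Finset.mem_filter]
      refine ⟨Finset.mem_univ s, ?_⟩
      by_contra hc
      exact hnr (hdc r s (by rw [Fin.le_def]; omega) hs)
    have hcard : (univ.filter (fun s : Fin k => (s : ℕ) < (r : ℕ))).card = (r : ℕ) := by
      have : univ.filter (fun s : Fin k => (s : ℕ) < (r : ℕ))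
          = Finset.attachFin (Finset.range (r : ℕ))
            (fun m hm => lt_of_lt_of_le (Finset.mem_range.mp hm) (by omega)) := by
        ext i; simp [Finset.mem_attachFin]
      rw [this, Finset.card_attachFin, Finset.card_range]
    have := Finset.card_le_card hsub
    omega

end Helpers
lemma choose_mono_half {n j j' : ℕ} (hjj : j ≤ j') (hj' : j' ≤ n / 2) :
    n.choose j ≤ n.choose j' := by
  induction j', hjj using Nat.le_induction with
  | base => exact le_refl _
  | succ j'' hj ih =>
    exact le_trans (ih (by omega)) (Nat.choose_le_succ_of_lt_half_left (by omega))

lemma choose_anti_half {n j j' : ℕ} (hj' : n / 2 ≤ j') (hjj : j' ≤ j) (hj : j ≤ n) :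
    n.choose j ≤ n.choose j' := by
  by_cases hc : n - j' ≤ n / 2
  · rw [← Nat.choose_symm hj, ← Nat.choose_symm (le_trans hjj hj)]
    exact choose_mono_half (by omega) hc
  · have : j' = n / 2 := by omega
    rw [this]
    exact Nat.choose_le_middle j n

/-- Single-step binomial difference bound. -/
lemma choose_step {n L j : ℕ} (hj1 : 1 ≤ j) (hj2 : j ≤ n / 2) (hL : n + 1 ≤ 2 * j + 2 * L) :
    n * n.choose j ≤ n * n.choose (j - 1) + 4 * L * n.choose (n / 2) := by
  set C := n.choose (n / 2) with hC
  set a := n.choose j with ha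
  set b := n.choose (j - 1) with hb
  obtain ⟨A, hA⟩ : ∃ A, n + 1 - j = A := ⟨_, rfl⟩
  obtain ⟨B, hB⟩ : ∃ B, n + 1 - 2 * j = B := ⟨_, rfl⟩
  have hjn : j ≤ n := le_trans hj2 (Nat.div_le_self n 2)
  have h2j : 2 * j ≤ n := by omega
  have hAB : j + B = A := by omega
  have hid : a * j = b * A := by
    have := Nat.choose_succ_right_eq n (j - 1)
    rw [show j - 1 + 1 = j by omega] at this
    rw [ha, hb, this]
    congr 1
    omega
  have hmid : a ≤ C := Nat.choose_le_middle j n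
  have hBL : B ≤ 2 * L := by omega
  have hnA : n ≤ 2 * A := by omega
  have key : A * (n * a) ≤ A * (n * b + 4 * L * C) := by
    have h1 : A * (n * a) = n * (b * A) + n * a * B := by
      rw [← hid, ← hAB]; ring
    have h2 : n * a * B ≤ A * (4 * L * C) := by
      calc n * a * B ≤ (2 * A) * C * (2 * L) :=
            Nat.mul_le_mul (Nat.mul_le_mul hnA hmid) hBL
        _ = A * (4 * L * C) := by ring
    calc A * (n * a) = n * (b * A) + n * a * B := h1
      _ ≤ n * (b * A) + A * (4 * L * C) := Nat.add_le_add_left h2 _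
      _ = A * (n * b + 4 * L * C) := by ring
  exact Nat.le_of_mul_le_mul_left key (by omega)

/-- Iterated binomial difference bound. -/
lemma choose_iter {n L : ℕ} (hLh : L ≤ n / 2) :
    ∀ s : ℕ, s ≤ L →
      n * n.choose (n / 2) ≤ n * n.choose (n / 2 - s) + 4 * L * s * n.choose (n / 2) := by
  intro s
  induction s with
  | zero => intro _; simp
  | succ s ih =>
    intro hs
    have hstep := choose_step (n := n) (L := L) (j := n / 2 - s) (by omega) (by omega) (by omega)
    have hrw : n / 2 - s - 1 = n / 2 - (s + 1) := by omega
    rw [hrw] at hstep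
    calc n * n.choose (n / 2)
        ≤ n * n.choose (n / 2 - s) + 4 * L * s * n.choose (n / 2) := ih (by omega)
      _ ≤ (n * n.choose (n / 2 - (s + 1)) + 4 * L * n.choose (n / 2))
            + 4 * L * s * n.choose (n / 2) := Nat.add_le_add_right hstep _
      _ = n * n.choose (n / 2 - (s + 1)) + 4 * L * (s + 1) * n.choose (n / 2) := by ring

/-- Real-valued binomial ratio bound for layers near the middle. -/
lemma choose_bound_real {n L s : ℕ} (hLh : L ≤ n / 2) (hs : s ≤ L) (hn : 0 < n) :
    (1 - 4 * (L : ℝ) ^ 2 / n) * (n.choose (n / 2) : ℝ) ≤ (n.choose (n / 2 - s) : ℝ) := by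
  have h := choose_iter hLh s hs
  have hcast : (n : ℝ) * (n.choose (n / 2) : ℝ)
      ≤ (n : ℝ) * (n.choose (n / 2 - s) : ℝ) + 4 * (L : ℝ) * (s : ℝ) * (n.choose (n / 2) : ℝ) := by
    exact_mod_cast h
  have hsL : (s : ℝ) ≤ (L : ℝ) := by exact_mod_cast hs
  have hnpos : (0 : ℝ) < n := by exact_mod_cast hn
  have hC : (0 : ℝ) ≤ (n.choose (n / 2) : ℝ) := Nat.cast_nonneg _
  have hL0 : (0 : ℝ) ≤ (L : ℝ) := Nat.cast_nonneg _
  have h4 : 4 * (L : ℝ) * (s : ℝ) * (n.choose (n / 2) : ℝ)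
      ≤ 4 * (L : ℝ) ^ 2 * (n.choose (n / 2) : ℝ) := by
    have := mul_le_mul_of_nonneg_left hsL (by positivity : (0:ℝ) ≤ 4 * (L : ℝ) * (n.choose (n / 2) : ℝ))
    nlinarith
  have key : ((1 : ℝ) - 4 * (L : ℝ) ^ 2 / n) * (n.choose (n / 2) : ℝ) * n
      ≤ (n.choose (n / 2 - s) : ℝ) * n := by
    have he : ((1 : ℝ) - 4 * (L : ℝ) ^ 2 / n) * (n.choose (n / 2) : ℝ) * n
        = (n : ℝ) * (n.choose (n / 2) : ℝ) - 4 * (L : ℝ) ^ 2 * (n.choose (n / 2) : ℝ) := by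
      field_simp
    rw [he]
    linarith
  exact le_of_mul_le_mul_right key hnpos


lemma exists_perm_image {α : Type*} [Fintype α] [DecidableEq α] {x y : Finset α}
    (h : x.card = y.card) : ∃ τ : Equiv.Perm α, x.image τ = y := by
  classical
  have h1 : Fintype.card {a // a ∈ x} = Fintype.card {a // a ∈ y} := by
    simp only [Fintype.card_coe, h]
  have h2 : Fintype.card {a // ¬ a ∈ x} = Fintype.card {a // ¬ a ∈ y} := by
    rw [Fintype.card_subtype_compl, Fintype.card_subtype_compl, h1]
  let e1 := Fintype.equivOfCardEq h1
  let e2 := Fintype.equivOfCardEq h2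
  refine ⟨Equiv.subtypeCongr e1 e2, ?_⟩
  have hsub : x.image (Equiv.subtypeCongr e1 e2) ⊆ y := by
    intro b hb
    obtain ⟨a, ha, rfl⟩ := Finset.mem_image.mp hb
    have happ : Equiv.subtypeCongr e1 e2 a = (e1 ⟨a, ha⟩ : α) := by
      simp [Equiv.subtypeCongr, Equiv.sumCompl_symm_apply_of_pos ha]
    rw [happ]
    exact (e1 ⟨a, ha⟩).2
  refine Finset.eq_of_subset_of_card_le hsub ?_
  rw [Finset.card_image_of_injective _ (Equiv.injective _), h]

/-- Averaging over maximal chains, via permutations. -/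
lemma exists_good_chain {n : ℕ} (f : Finset (Fin n) → ℝ) :
    ∃ Y : ℕ → Finset (Fin n),
      (∀ j, j ≤ n → (Y j).card = j) ∧ (∀ j j', j < j' → j' ≤ n → Y j ⊂ Y j') ∧
      ∑ x : Finset (Fin n), f x ≤ ∑ j ∈ Finset.range (n+1), (n.choose j : ℝ) * f (Y j) := by
  classical
  set pref : Equiv.Perm (Fin n) → ℕ → Finset (Fin n) := fun σ j => (Xset n j).image σ with hpref
  have hcard : ∀ (σ : Equiv.Perm (Fin n)) (j : ℕ), j ≤ n → (pref σ j).card = j := by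
    intro σ j hj
    rw [hpref]
    simp only
    rw [Finset.card_image_of_injective _ σ.injective, card_Xset hj]
  have hss : ∀ (σ : Equiv.Perm (Fin n)) (j j' : ℕ), j < j' → j' ≤ n → pref σ j ⊂ pref σ j' := by
    intro σ j j' hlt hj'
    have hsub : pref σ j ⊆ pref σ j' := Finset.image_subset_image (Xset_ssubset hlt hj').1
    have hc : (pref σ j).card < (pref σ j').card := by
      rw [hcard σ j (by omega), hcard σ j' hj']; omega
    exact ⟨hsub, fun hsub' => absurd (Finset.card_le_card hsub') (not_le.mpr hc)⟩
  -- the key counting identity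
  have key : ∀ j, j ≤ n →
      (n.choose j : ℝ) * ∑ σ : Equiv.Perm (Fin n), f (pref σ j)
        = (n.factorial : ℝ) * ∑ x ∈ Finset.powersetCard j univ, f x := by
    intro j hj
    have hmaps : ∀ σ ∈ (univ : Finset (Equiv.Perm (Fin n))),
        pref σ j ∈ Finset.powersetCard j univ := fun σ _ =>
      Finset.mem_powersetCard_univ.mpr (hcard σ j hj)
    have hfib := Finset.sum_fiberwise_of_maps_to hmaps (fun σ => f (pref σ j))
    have hfibcard := Finset.card_eq_sum_card_fiberwise hmaps
    -- all fibers have the same cardinality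
    have hτ : ∀ x ∈ Finset.powersetCard j univ, ∀ y ∈ Finset.powersetCard j univ,
        ((univ : Finset (Equiv.Perm (Fin n))).filter (fun σ => pref σ j = x)).card
          = ((univ : Finset (Equiv.Perm (Fin n))).filter (fun σ => pref σ j = y)).card := by
      intro x hx y hy
      have hxc := Finset.mem_powersetCard_univ.mp hx
      have hyc := Finset.mem_powersetCard_univ.mp hy
      obtain ⟨τ, hτ⟩ := exists_perm_image (hxc.trans hyc.symm)
      refine Finset.card_nbij' (fun σ => τ * σ) (fun σ => τ⁻¹ * σ) ?_ ?_ ?_ ?_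
      · intro σ hσ
        simp only [Finset.coe_filter, Set.mem_setOf_eq, Finset.mem_filter, Finset.mem_univ, true_and] at hσ ⊢
        rw [hpref] at hσ ⊢
        simp only at hσ ⊢
        rw [Equiv.Perm.coe_mul, ← Finset.image_image, hσ, hτ]
      · intro σ hσ
        simp only [Finset.coe_filter, Set.mem_setOf_eq, Finset.mem_filter, Finset.mem_univ, true_and] at hσ ⊢
        rw [hpref] at hσ ⊢
        simp only at hσ ⊢
        rw [Equiv.Perm.coe_mul, ← Finset.image_image, hσ, ← hτ, Finset.image_image]
        ext a
        simp
      · intro σ _; group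
      · intro σ _; group
    set N := ((univ : Finset (Equiv.Perm (Fin n))).filter
        (fun σ => pref σ j = Xset n j)).card with hN
    have hXj : Xset n j ∈ Finset.powersetCard j univ :=
      Finset.mem_powersetCard_univ.mpr (card_Xset hj)
    have hconst : ∀ x ∈ Finset.powersetCard j univ,
        ((univ : Finset (Equiv.Perm (Fin n))).filter (fun σ => pref σ j = x)).card = N :=
      fun x hx => hτ x hx (Xset n j) hXj
    -- N * choose = n!
    have hPcard : (univ : Finset (Equiv.Perm (Fin n))).card = n.factorial := by
      rw [Finset.card_univ, Fintype.card_perm, Fintype.card_fin]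
    have hNfact : (Finset.powersetCard j (univ : Finset (Fin n))).card * N = n.factorial := by
      rw [← hPcard, hfibcard, Finset.sum_congr rfl hconst, Finset.sum_const, smul_eq_mul]
    have hNchoose : (n.choose j) * N = n.factorial := by
      rw [← hNfact, Finset.card_powersetCard, Finset.card_univ, Fintype.card_fin]
    -- sum over perms in terms of sum over sets
    have hsum : ∑ σ : Equiv.Perm (Fin n), f (pref σ j)
        = (N : ℝ) * ∑ x ∈ Finset.powersetCard j univ, f x := by
      rw [← hfib, Finset.mul_sum]
      refine Finset.sum_congr rfl fun x hx => ?_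
      rw [Finset.sum_congr rfl (fun σ hσ => by
          rw [(Finset.mem_filter.mp hσ).2]), Finset.sum_const, hconst x hx, nsmul_eq_mul]
    rw [hsum, ← mul_assoc, ← Nat.cast_mul, hNchoose]
  -- summing the key identity
  have total : ∑ σ : Equiv.Perm (Fin n), ∑ j ∈ Finset.range (n+1), (n.choose j : ℝ) * f (pref σ j)
      = ∑ σ : Equiv.Perm (Fin n), ∑ x : Finset (Fin n), f x := by
    rw [Finset.sum_comm]
    have hL : ∀ j ∈ Finset.range (n+1),
        ∑ σ : Equiv.Perm (Fin n), (n.choose j : ℝ) * f (pref σ j)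
          = (n.factorial : ℝ) * ∑ x ∈ Finset.powersetCard j univ, f x := by
      intro j hj
      rw [← Finset.mul_sum]
      exact key j (Nat.lt_succ_iff.mp (Finset.mem_range.mp hj))
    rw [Finset.sum_congr rfl hL, ← Finset.mul_sum]
    have hpart : ∑ j ∈ Finset.range (n+1), ∑ x ∈ Finset.powersetCard j univ, f x
        = ∑ x : Finset (Fin n), f x := by
      have hmaps2 : ∀ x ∈ (univ : Finset (Finset (Fin n))), x.card ∈ Finset.range (n+1) :=
        fun x _ => Finset.mem_range.mpr (Nat.lt_succ_of_le (by simpa using Finset.card_le_univ x))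
      rw [← Finset.sum_fiberwise_of_maps_to hmaps2 f]
      refine Finset.sum_congr rfl fun j hj => ?_
      congr 1
      ext x
      simp [Finset.mem_powersetCard_univ]
    rw [hpart, Finset.sum_const, Finset.card_univ, Fintype.card_perm, Fintype.card_fin,
      nsmul_eq_mul]
  have hne : (univ : Finset (Equiv.Perm (Fin n))).Nonempty := Finset.univ_nonempty
  obtain ⟨σ, _, hσ⟩ := Finset.exists_le_of_sum_le hne (le_of_eq total.symm)
  exact ⟨pref σ, hcard σ, hss σ, hσ⟩



section MoreHelpers

variable {m : ℕ} {G : Set (List (Fin m))}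

lemma valid_empty (hG2 : ∀ l ∈ G, 2 ≤ l.length) :
    ValidChainTemplate G (fun _ : ℕ => (∅ : Finset (Fin m))) := by
  constructor
  · simp
  · rintro c _ ⟨l, _, hsupp, hmem⟩
    have hnil : l = [] := by
      cases l with
      | nil => rfl
      | cons a l => exact absurd rfl (hsupp a (by simp))
    rw [hnil] at hmem
    simpa using hG2 [] hmem

lemma omegaChain_eq_sum (β : Fin m → ℝ) {t : ℕ → Finset (Fin m)} (s : Finset ℕ)
    (hsub : ∀ j, t j ≠ ∅ → j ∈ s) :
    omegaChain β t = ∑ j ∈ s, logw β (t j) := by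
  refine finsum_eq_sum_of_support_subset _ fun j hj => ?_
  simp only [Function.mem_support] at hj
  by_contra hjs
  have : t j = ∅ := by
    by_contra hne
    exact hjs (hsub j hne)
  rw [this] at hj
  simp [logw] at hj

lemma W_mkT {n : ℕ} (β : Fin m → ℝ) {k : ℕ} {pos : Fin k → ℕ}
    (hinj : Function.Injective pos) (hpn : ∀ r, pos r ≤ n) (v : Fin k → Finset (Fin m)) :
    ∑ x : Finset (Fin n), logw β (mkT pos v x.card)
      = ∑ r : Fin k, (n.choose (pos r) : ℝ) * logw β (v r) := by
  classical
  have himg : (univ.image pos) ⊆ Finset.range (n+1) := by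
    intro j hj
    obtain ⟨r, _, rfl⟩ := Finset.mem_image.mp hj
    exact Finset.mem_range.mpr (by have := hpn r; omega)
  calc ∑ x : Finset (Fin n), logw β (mkT pos v x.card)
      = ∑ j ∈ Finset.range (n+1), (n.choose j : ℝ) * logw β (mkT pos v j) :=
        sum_card_eq (fun j => logw β (mkT pos v j))
    _ = ∑ j ∈ univ.image pos, (n.choose j : ℝ) * logw β (mkT pos v j) := by
        refine (Finset.sum_subset himg (fun j _ hj => ?_)).symm
        have hempty : mkT pos v j = ∅ := by
          rw [mkT, dif_neg]
          rintro ⟨r, hr⟩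
          exact hj (Finset.mem_image.mpr ⟨r, Finset.mem_univ r, hr⟩)
        rw [hempty, logw_empty, mul_zero]
    _ = ∑ r : Fin k, (n.choose (pos r) : ℝ) * logw β (mkT pos v (pos r)) :=
        Finset.sum_image (fun r _ s _ h => hinj h)
    _ = ∑ r : Fin k, (n.choose (pos r) : ℝ) * logw β (v r) := by
        refine Finset.sum_congr rfl fun r _ => ?_
        rw [mkT_pos hinj]

end MoreHelpers

section MainHelpers

variable {m : ℕ}

/-- The weight of a layered template on `𝒫([n])` determined by a chain template. -/
noncomputable def Wt (β : Fin m → ℝ) (n : ℕ) (t : ℕ → Finset (Fin m)) : ℝ :=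
  ∑ x : Finset (Fin n), logw β (t x.card)

lemma Wt_eq_range (β : Fin m → ℝ) (n : ℕ) (t : ℕ → Finset (Fin m)) :
    Wt β n t = ∑ j ∈ Finset.range (n+1), (n.choose j : ℝ) * logw β (t j) :=
  sum_card_eq (fun j => logw β (t j))

lemma Wt_nonneg {β : Fin m → ℝ} (hβ : ∀ i, 0 < β i) (n : ℕ) (t : ℕ → Finset (Fin m)) :
    0 ≤ Wt β n t :=
  Finset.sum_nonneg fun x _ => logw_nonneg hβ _

lemma Wt_mkT {n : ℕ} (β : Fin m → ℝ) {k : ℕ} {pos : Fin k → ℕ}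
    (hinj : Function.Injective pos) (hpn : ∀ r, pos r ≤ n) (v : Fin k → Finset (Fin m)) :
    Wt β n (mkT pos v) = ∑ r : Fin k, (n.choose (pos r) : ℝ) * logw β (v r) :=
  W_mkT β hinj hpn v

end MainHelpers

theorem stmt11 (m : ℕ) (β : Fin m → ℝ) (hβ : ∀ i, 0 < β i)
    (G : Set (List (Fin m))) (hsp : Sparse m G) (hG2 : ∀ l ∈ G, 2 ≤ l.length)
    (L : ℕ)
    (hL : ∀ t : ℕ → Finset (Fin m), ValidChainTemplate G t → {j | t j ≠ ∅}.ncard < L) :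
    ∃ Cconst : ℝ, ∀ n : ℕ, 1 ≤ n →
      ∃ T : Finset (Fin n) → Finset (Fin m),
        ValidTemplate G T ∧
        (∀ x y : Finset (Fin n), x.card = y.card → T x = T y) ∧
        (∃ a : ℕ, ∀ x : Finset (Fin n), T x ≠ ∅ → a ≤ x.card ∧ x.card < a + L) ∧
        (∀ T' : Finset (Fin n) → Finset (Fin m), ValidTemplate G T' →
          (∑ x : Finset (Fin n), Real.log (1 + ∑ i ∈ T' x, β i)) ≤
            ∑ x : Finset (Fin n), Real.log (1 + ∑ i ∈ T x, β i)) ∧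
        (∑ x : Finset (Fin n), Real.log (1 + ∑ i ∈ T x, β i)) ≤
          omegaCrit β G * (n.choose (n / 2)) ∧
        omegaCrit β G * (1 - Cconst / n) * (n.choose (n / 2)) ≤
          ∑ x : Finset (Fin n), Real.log (1 + ∑ i ∈ T x, β i) := by
  classical
  have hL1 : 1 ≤ L := by
    have h0 : {j : ℕ | (fun _ : ℕ => (∅ : Finset (Fin m))) j ≠ ∅} = ∅ := by simp
    have := hL (fun _ => ∅) (valid_empty hG2)
    rw [h0] at this
    exact (by simpa using this : 0 < L)
  set S : Set ℝ := {w | ∃ t, ValidChainTemplate G t ∧ w = omegaChain β t} with hSdef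
  have hcrit : omegaCrit β G = sSup S := rfl
  have hSmem0 : (0:ℝ) ∈ S := by
    refine ⟨fun _ => ∅, valid_empty hG2, ?_⟩
    rw [omegaChain_eq_sum β (∅ : Finset ℕ) (fun j hj => absurd rfl hj)]
    simp
  have hSne : S.Nonempty := ⟨0, hSmem0⟩
  have hSbdd : BddAbove S := by
    refine ⟨(L:ℝ) * Real.log (1 + ∑ i : Fin m, β i), fun w hw => ?_⟩
    obtain ⟨t, htv, rfl⟩ := hw
    have hlog0 : 0 ≤ Real.log (1 + ∑ i : Fin m, β i) := by
      have : (0:ℝ) ≤ ∑ i : Fin m, β i := Finset.sum_nonneg fun i _ => (hβ i).le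
      exact Real.log_nonneg (by linarith)
    rw [omegaChain_eq_sum β htv.1.toFinset (fun j hj => htv.1.mem_toFinset.mpr hj)]
    calc ∑ j ∈ htv.1.toFinset, logw β (t j)
        ≤ htv.1.toFinset.card • Real.log (1 + ∑ i : Fin m, β i) :=
          Finset.sum_le_card_nsmul _ _ _ (fun j _ => logw_le hβ _)
      _ = (htv.1.toFinset.card : ℝ) * Real.log (1 + ∑ i : Fin m, β i) := nsmul_eq_mul _ _
      _ ≤ (L:ℝ) * Real.log (1 + ∑ i : Fin m, β i) := by
          refine mul_le_mul_of_nonneg_right ?_ hlog0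
          have hcard : htv.1.toFinset.card < L := by
            rw [← Set.ncard_eq_toFinset_card _ htv.1]
            exact hL t htv
          exact_mod_cast hcard.le
  have hcrit0 : 0 ≤ omegaCrit β G := le_csSup hSbdd hSmem0
  refine ⟨4 * (L:ℝ)^2, ?_⟩
  intro n hn
  -- the finite family of valid chain templates supported in `[0,n]`
  set V : Set (ℕ → Finset (Fin m)) := {t | ValidChainTemplate G t ∧ ∀ j, n < j → t j = ∅}
    with hVdef
  have hVfin : V.Finite := by
    have himg : V ⊆ (fun (s : Fin (n+1) → Finset (Fin m)) => fun j : ℕ =>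
        if h : j < n + 1 then s ⟨j, h⟩ else ∅) '' Set.univ := by
      intro t ht
      refine ⟨fun j => t j, Set.mem_univ _, ?_⟩
      funext j
      by_cases h : j < n + 1
      · simp only [dif_pos h]
      · simp only [dif_neg h]
        exact (ht.2 j (by omega)).symm
    exact (Set.finite_univ.image _).subset himg
  have hVne : (fun _ : ℕ => (∅ : Finset (Fin m))) ∈ V := ⟨valid_empty hG2, fun _ _ => rfl⟩
  obtain ⟨tOpt, htOptmem, hOptmax⟩ := hVfin.toFinset.exists_max_image (Wt β n)
    ⟨_, hVfin.mem_toFinset.mpr hVne⟩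
  rw [Set.Finite.mem_toFinset] at htOptmem
  have hOpt' : ∀ t ∈ V, Wt β n t ≤ Wt β n tOpt := fun t ht =>
    hOptmax t (hVfin.mem_toFinset.mpr ht)
  -- enumeration of the support of `tOpt`
  obtain ⟨k, pos, hposm, hmk, hkcard, hposmem⟩ := exists_enum htOptmem.1.1
  have hkL : k < L := by rw [hkcard]; exact hL tOpt htOptmem.1
  have hposn : ∀ r, pos r ≤ n := by
    intro r
    by_contra h
    exact hposmem r (htOptmem.2 (pos r) (by omega))
  set h2 := n / 2 with hh2
  set Q := univ.filter (fun r : Fin k => pos r ≤ h2) with hQdef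
  set p := Q.card with hpdef
  have hQdc : ∀ r s : Fin k, r ≤ s → s ∈ Q → r ∈ Q := by
    intro r s hrs hs
    simp only [hQdef, Finset.mem_filter, Finset.mem_univ, true_and] at hs ⊢
    exact le_trans (hposm.monotone hrs) hs
  have hQiff : ∀ r : Fin k, pos r ≤ h2 ↔ (r : ℕ) < p := by
    intro r
    rw [hpdef, ← downward_closed_iff hQdc r]
    simp [hQdef]
  have hpk : p ≤ k := by
    rw [hpdef, hQdef]
    exact le_trans (Finset.card_le_card (Finset.filter_subset _ _)) (by simp)
  have hp1 : p ≤ h2 + 1 := by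
    rcases Nat.eq_zero_or_pos p with hp0 | hp0
    · omega
    · have hplt : p - 1 < k := by omega
      have hmemQ : pos ⟨p - 1, hplt⟩ ≤ h2 :=
        (hQiff _).mpr (by simp only [Fin.val_mk]; omega)
      have := strictMono_ge hposm ⟨p - 1, hplt⟩
      simp only [Fin.val_mk] at this
      omega
  set npos : Fin k → ℕ := fun r => (h2 + 1 - p) + r with hnposdef
  have hnposm : StrictMono npos := by
    intro r s hrs
    simp only [hnposdef]
    have := Fin.lt_def.mp hrs
    omega
  have hkey : ∀ r : Fin k, npos r ≤ n ∧ n.choose (pos r) ≤ n.choose (npos r) := by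
    intro r
    by_cases hr : (r : ℕ) < p
    · have h1 : pos r ≤ h2 := (hQiff r).mpr hr
      have hple : npos r ≤ h2 := by simp only [hnposdef]; omega
      have hplt : p - 1 < k := by omega
      have hgap := strictMono_gap hposm ((p - 1) - (r : ℕ)) r ⟨p - 1, hplt⟩
        (by simp only [Fin.val_mk]; omega)
      have hmax : pos ⟨p - 1, hplt⟩ ≤ h2 :=
        (hQiff _).mpr (by simp only [Fin.val_mk]; omega)
      have hle : pos r ≤ npos r := by simp only [hnposdef]; omega
      exact ⟨le_trans hple (Nat.div_le_self n 2), choose_mono_half hle hple⟩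
    · push_neg at hr
      have hpklt : p < k := by have := r.isLt; omega
      have hnot : ¬ pos ⟨p, hpklt⟩ ≤ h2 := by
        intro hc
        have := (hQiff ⟨p, hpklt⟩).mp hc
        simp only [Fin.val_mk] at this
        omega
      have hgap := strictMono_gap hposm ((r : ℕ) - p) ⟨p, hpklt⟩ r
        (by simp only [Fin.val_mk]; omega)
      have hge : h2 + 1 ≤ npos r := by simp only [hnposdef]; omega
      have hle : npos r ≤ pos r := by simp only [hnposdef]; omega
      exact ⟨le_trans hle (hposn r), choose_anti_half (by omega) hle (hposn r)⟩
  -- the compressed optimal template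
  have hmkvalid : ValidChainTemplate G (mkT pos (tOpt ∘ pos)) := by
    rw [hmk]; exact htOptmem.1
  have htCvalid : ValidChainTemplate G (mkT npos (tOpt ∘ pos)) :=
    mkT_valid_relabel hposm hnposm hmkvalid
  have htCV : mkT npos (tOpt ∘ pos) ∈ V := by
    refine ⟨htCvalid, fun j hj => ?_⟩
    by_contra hne
    obtain ⟨r, hr, _⟩ := mkT_support hne
    have := (hkey r).1
    omega
  have hWtOpt : Wt β n tOpt = ∑ r : Fin k, (n.choose (pos r) : ℝ) * logw β (tOpt (pos r)) := by
    conv_lhs => rw [← hmk]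
    exact Wt_mkT β hposm.injective hposn _
  have hWtC : Wt β n (mkT npos (tOpt ∘ pos))
      = ∑ r : Fin k, (n.choose (npos r) : ℝ) * logw β (tOpt (pos r)) :=
    Wt_mkT β hnposm.injective (fun r => (hkey r).1) _
  have hcomp : Wt β n tOpt ≤ Wt β n (mkT npos (tOpt ∘ pos)) := by
    rw [hWtOpt, hWtC]
    refine Finset.sum_le_sum fun r _ => ?_
    exact mul_le_mul_of_nonneg_right (Nat.cast_le.mpr (hkey r).2) (logw_nonneg hβ _)
  have hWnn : 0 ≤ Wt β n (mkT npos (tOpt ∘ pos)) := Wt_nonneg hβ n _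
  refine ⟨fun x => mkT npos (tOpt ∘ pos) x.card, validTemplate_of_chainTemplate htCvalid,
    fun x y hxy => by simp only [hxy], ⟨h2 + 1 - p, ?_⟩, ?_, ?_, ?_⟩
  · -- support window
    intro x hx
    obtain ⟨r, hr, _⟩ := mkT_support hx
    have hrk := r.isLt
    simp only [hnposdef] at hr
    omega
  · -- maximality
    intro T' hT'
    show (∑ x : Finset (Fin n), logw β (T' x)) ≤ Wt β n (mkT npos (tOpt ∘ pos))
    obtain ⟨Y, hYc, hYs, hYsum⟩ := exists_good_chain (fun x => logw β (T' x))
    have ht'' : ValidChainTemplate G (fun j => if j ≤ n then T' (Y j) else ∅) :=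
      valid_chain_of_chain hT' Y hYc hYs
    have ht''V : (fun j => if j ≤ n then T' (Y j) else ∅) ∈ V :=
      ⟨ht'', fun j hj => if_neg (by omega)⟩
    calc ∑ x : Finset (Fin n), logw β (T' x)
        ≤ ∑ j ∈ Finset.range (n+1), (n.choose j : ℝ) * logw β (T' (Y j)) := hYsum
      _ = ∑ j ∈ Finset.range (n+1),
            (n.choose j : ℝ) * logw β (if j ≤ n then T' (Y j) else ∅) := by
          refine Finset.sum_congr rfl fun j hj => ?_
          rw [if_pos (Nat.lt_succ_iff.mp (Finset.mem_range.mp hj))]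
      _ = Wt β n (fun j => if j ≤ n then T' (Y j) else ∅) := (Wt_eq_range β n _).symm
      _ ≤ Wt β n tOpt := hOpt' _ ht''V
      _ ≤ Wt β n (mkT npos (tOpt ∘ pos)) := hcomp
  · -- upper bound
    show Wt β n (mkT npos (tOpt ∘ pos)) ≤ omegaCrit β G * (n.choose h2 : ℝ)
    have hsub : ∀ j, mkT npos (tOpt ∘ pos) j ≠ ∅ → j ∈ Finset.range (n+1) := by
      intro j hj
      obtain ⟨r, hr, _⟩ := mkT_support hj
      have := (hkey r).1
      exact Finset.mem_range.mpr (by omega)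
    calc Wt β n (mkT npos (tOpt ∘ pos))
        = ∑ j ∈ Finset.range (n+1), (n.choose j : ℝ) * logw β (mkT npos (tOpt ∘ pos) j) :=
          Wt_eq_range β n _
      _ ≤ ∑ j ∈ Finset.range (n+1), (n.choose h2 : ℝ) * logw β (mkT npos (tOpt ∘ pos) j) := by
          refine Finset.sum_le_sum fun j _ => ?_
          exact mul_le_mul_of_nonneg_right
            (Nat.cast_le.mpr (Nat.choose_le_middle j n)) (logw_nonneg hβ _)
      _ = (n.choose h2 : ℝ) * ∑ j ∈ Finset.range (n+1), logw β (mkT npos (tOpt ∘ pos) j) := by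
          rw [Finset.mul_sum]
      _ = (n.choose h2 : ℝ) * omegaChain β (mkT npos (tOpt ∘ pos)) := by
          rw [omegaChain_eq_sum β (Finset.range (n+1)) hsub]
      _ ≤ (n.choose h2 : ℝ) * omegaCrit β G := by
          refine mul_le_mul_of_nonneg_left ?_ (Nat.cast_nonneg _)
          exact le_csSup hSbdd ⟨_, htCvalid, rfl⟩
      _ = omegaCrit β G * (n.choose h2 : ℝ) := mul_comm _ _
  · -- lower bound
    show omegaCrit β G * (1 - 4 * (L:ℝ)^2 / n) * (n.choose h2 : ℝ)
        ≤ Wt β n (mkT npos (tOpt ∘ pos))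
    by_cases hbig : 4 * L * L ≤ n
    · obtain ⟨M, hM⟩ : ∃ M, L * L = M := ⟨_, rfl⟩
      have hbig' : 4 * M ≤ n := by rw [← hM, ← Nat.mul_assoc]; exact hbig
      have hLM : L ≤ M := by
        calc L = L * 1 := (Nat.mul_one L).symm
          _ ≤ L * L := Nat.mul_le_mul_left L hL1
          _ = M := hM
      have hLh : L ≤ h2 := by rw [hh2]; omega
      set c0 : ℝ := (1 - 4 * (L:ℝ)^2 / n) * (n.choose h2 : ℝ) with hc0def
      have hn0 : (0:ℝ) < n := by exact_mod_cast hn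
      have hfrac : 4 * (L:ℝ)^2 / n ≤ 1 := by
        rw [div_le_one hn0]
        have hcast : ((4 * L * L : ℕ) : ℝ) ≤ (n : ℝ) := Nat.cast_le.mpr hbig
        push_cast at hcast
        nlinarith
      have hc0 : 0 ≤ c0 := mul_nonneg (by linarith) (Nat.cast_nonneg _)
      have hWc0 : ∀ w ∈ S, w * c0 ≤ Wt β n (mkT npos (tOpt ∘ pos)) := by
        rintro w ⟨t, htv, rfl⟩
        obtain ⟨k', pos', hposm', hmk', hk'card, hposmem'⟩ := exists_enum htv.1
        have hk'L : k' < L := by rw [hk'card]; exact hL t htv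
        set q : Fin k' → ℕ := fun r => h2 + 1 - k' + r with hqdef
        have hqm : StrictMono q := by
          intro r s hrs
          simp only [hqdef]
          have := Fin.lt_def.mp hrs
          omega
        have hqh : ∀ r, q r ≤ h2 := by
          intro r
          simp only [hqdef]
          have := r.isLt
          omega
        have hqn : ∀ r, q r ≤ n := fun r => le_trans (hqh r) (Nat.div_le_self n 2)
        have hplvalid0 : ValidChainTemplate G (mkT pos' (t ∘ pos')) := by
          rw [hmk']; exact htv
        have hplvalid : ValidChainTemplate G (mkT q (t ∘ pos')) :=
          mkT_valid_relabel hposm' hqm hplvalid0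
        have hplV : mkT q (t ∘ pos') ∈ V := by
          refine ⟨hplvalid, fun j hj => ?_⟩
          by_contra hne
          obtain ⟨r, hr, _⟩ := mkT_support hne
          have := hqn r
          omega
        have hWpl : Wt β n (mkT q (t ∘ pos'))
            = ∑ r : Fin k', (n.choose (q r) : ℝ) * logw β (t (pos' r)) :=
          Wt_mkT β hqm.injective hqn _
        have homega : omegaChain β t = ∑ r : Fin k', logw β (t (pos' r)) := by
          rw [omegaChain_eq_sum β (univ.image pos') (fun j hj => ?_)]
          · exact Finset.sum_image (fun a _ b _ h => hposm'.injective h)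
          · by_contra hjm
            have hemp : mkT pos' (t ∘ pos') j = ∅ := by
              rw [mkT, dif_neg]
              rintro ⟨r, hr⟩
              exact hjm (Finset.mem_image.mpr ⟨r, Finset.mem_univ r, hr⟩)
            rw [hmk'] at hemp
            exact hj hemp
        have hterm : ∀ r : Fin k',
            c0 * logw β (t (pos' r)) ≤ (n.choose (q r) : ℝ) * logw β (t (pos' r)) := by
          intro r
          refine mul_le_mul_of_nonneg_right ?_ (logw_nonneg hβ _)
          have hs : q r = h2 - (k' - 1 - (r : ℕ)) := by
            simp only [hqdef]
            have := r.isLt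
            omega
          have hsL : (k' - 1 - (r : ℕ)) ≤ L := by omega
          have hb := choose_bound_real hLh hsL (by omega : 0 < n)
          rw [hc0def, ← hh2] at *
          rw [hs]
          exact hb
        calc omegaChain β t * c0 = c0 * ∑ r : Fin k', logw β (t (pos' r)) := by
              rw [homega, mul_comm]
          _ = ∑ r : Fin k', c0 * logw β (t (pos' r)) := Finset.mul_sum _ _ _
          _ ≤ ∑ r : Fin k', (n.choose (q r) : ℝ) * logw β (t (pos' r)) :=
              Finset.sum_le_sum fun r _ => hterm r
          _ = Wt β n (mkT q (t ∘ pos')) := hWpl.symm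
          _ ≤ Wt β n tOpt := hOpt' _ hplV
          _ ≤ Wt β n (mkT npos (tOpt ∘ pos)) := hcomp
      rcases eq_or_lt_of_le hc0 with heq | hpos0
      · rw [mul_assoc, show ((1 - 4 * (L:ℝ)^2 / n) * (n.choose h2 : ℝ)) = c0 from rfl,
          ← heq, mul_zero]
        exact hWnn
      · rw [mul_assoc, show ((1 - 4 * (L:ℝ)^2 / n) * (n.choose h2 : ℝ)) = c0 from rfl]
        have hcle : omegaCrit β G ≤ Wt β n (mkT npos (tOpt ∘ pos)) / c0 := by
          rw [hcrit]
          refine csSup_le hSne fun w hw => ?_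
          rw [le_div_iff₀ hpos0]
          exact hWc0 w hw
        calc omegaCrit β G * c0 ≤ (Wt β n (mkT npos (tOpt ∘ pos)) / c0) * c0 :=
              mul_le_mul_of_nonneg_right hcle hc0
          _ = Wt β n (mkT npos (tOpt ∘ pos)) := div_mul_cancel₀ _ (ne_of_gt hpos0)
    · have hn0 : (0:ℝ) < n := by exact_mod_cast hn
      have hneg : (1 - 4 * (L:ℝ)^2 / n) ≤ 0 := by
        have hlt : (n:ℝ) < 4 * (L:ℝ)^2 := by
          have hlt' : n < 4 * L * L := by omega
          have := (Nat.cast_lt (α := ℝ)).mpr hlt'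
          push_cast at this
          nlinarith
        rw [sub_nonpos, le_div_iff₀ hn0]
        linarith
      have h1 : omegaCrit β G * (1 - 4 * (L:ℝ)^2 / n) ≤ 0 :=
        mul_nonpos_of_nonneg_of_nonpos hcrit0 hneg
      have h2' : omegaCrit β G * (1 - 4 * (L:ℝ)^2 / n) * (n.choose h2 : ℝ) ≤ 0 :=
        mul_nonpos_of_nonpos_of_nonneg h1 (Nat.cast_nonneg _)
      linarith
end

section
/- Let $\mathcal{G}$ forbid a monochromatic chain of every color and let $L = L(\mathcal{G})$ be such that no validly colored set contains a chain of $L$ elements. Then for all $n$, $|\Lambda(\mathcal{G},n)| \leq \sum_{S} (m+1)^{|S|}$ where the sum is over all subsets $S \subseteq \mathcal{P}([n])$ containing no chain of $L$ elements; in particular, by Mirsky's theorem every such $S$ is a union of at most $L-1$ antichains, so $|S| \leq (L-1)\binom{n}{\lfloor n/2\rfloor}$ and $|\Lambda(\mathcal{G},n)| \leq 2^{2^n}\,(m+1)^{(L-1)\binom{n}{\lfloor n/2\rfloor}}$. -/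
open Finset
open scoped Classical

noncomputable def colHt (n : ℕ) (S : Finset (Finset (Fin n))) : Finset (Fin n) → ℕ
  | x => ((S.filter (· ⊂ x)).attach).sup (fun y => colHt n S y.1 + 1)
termination_by x => x.card
decreasing_by exact Finset.card_lt_card (Finset.mem_filter.mp y.2).2

lemma colHt_eq (n : ℕ) (S : Finset (Finset (Fin n))) (x : Finset (Fin n)) :
    colHt n S x = ((S.filter (· ⊂ x)).attach).sup (fun y => colHt n S y.1 + 1) := by
  rw [colHt]

lemma colHt_lt_of_ssubset {n : ℕ} {S : Finset (Finset (Fin n))} {x y : Finset (Fin n)}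
    (hy : y ∈ S) (hyx : y ⊂ x) : colHt n S y < colHt n S x := by
  have hmem : y ∈ S.filter (· ⊂ x) := Finset.mem_filter.mpr ⟨hy, hyx⟩
  have h : colHt n S y + 1 ≤ colHt n S x := by
    rw [colHt_eq n S x]
    exact Finset.le_sup (f := fun z => colHt n S z.1 + 1)
      (Finset.mem_attach _ (⟨y, hmem⟩ : {z // z ∈ S.filter (· ⊂ x)}))
  omega

lemma colHt_chain {n : ℕ} (S : Finset (Finset (Fin n))) :
    ∀ x, x ∈ S → ∃ l : List (Finset (Fin n)), l.Chain' (· ⊂ ·) ∧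
      l.length = colHt n S x + 1 ∧ (∀ z ∈ l, z ∈ S) ∧ l.getLast? = some x := by
  intro x
  induction x using Finset.strongInduction with
  | _ x ih =>
    intro hx
    rcases (S.filter (· ⊂ x)).eq_empty_or_nonempty with he | hne
    · have h0 : colHt n S x = 0 := by rw [colHt_eq, he]; simp
      exact ⟨[x], List.isChain_singleton x, by simp [h0], by simp [hx], rfl⟩
    · obtain ⟨y, hy, hval⟩ := Finset.exists_mem_eq_sup ((S.filter (· ⊂ x)).attach)
        (hne.attach) (fun z => colHt n S z.1 + 1)
      have hyS : (y : Finset (Fin n)) ∈ S := (Finset.mem_filter.mp y.2).1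
      have hyx : (y : Finset (Fin n)) ⊂ x := (Finset.mem_filter.mp y.2).2
      obtain ⟨l, hc, hlen, hmem, hlast⟩ := ih y hyx hyS
      refine ⟨l ++ [x], ?_, ?_, ?_, ?_⟩
      · unfold List.Chain'; rw [List.isChain_append]
        refine ⟨hc, List.isChain_singleton x, ?_⟩
        intro a ha b hb
        rw [hlast, Option.mem_def, Option.some_inj] at ha
        simp only [List.head?_cons, Option.mem_def, Option.some_inj] at hb
        rw [← ha, ← hb]
        exact hyx
      · have : colHt n S x = colHt n S y + 1 := by rw [colHt_eq]; exact hval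
        simp [hlen, this]
      · intro z hz
        rcases List.mem_append.mp hz with h | h
        · exact hmem z h
        · simp only [List.mem_singleton] at h; rw [h]; exact hx
      · simp

lemma colHt_lt_L {n L : ℕ} {S : Finset (Finset (Fin n))}
    (hS : ¬ ∃ l : List (Finset (Fin n)), l.Chain' (· ⊂ ·) ∧ l.length = L ∧ ∀ x ∈ l, x ∈ S)
    {x : Finset (Fin n)} (hx : x ∈ S) : colHt n S x + 1 < L := by
  by_contra h
  push_neg at h
  obtain ⟨l, hc, hlen, hmem, -⟩ := colHt_chain S x hx
  exact hS ⟨l.take L, hc.take L, by rw [List.length_take, hlen]; omega,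
    fun z hz => hmem z (List.take_subset L l hz)⟩

/-- Mirsky + Sperner bound. -/
lemma mirsky_sperner {n L : ℕ} {S : Finset (Finset (Fin n))}
    (hS : ¬ ∃ l : List (Finset (Fin n)), l.Chain' (· ⊂ ·) ∧ l.length = L ∧ ∀ x ∈ l, x ∈ S) :
    S.card ≤ (L - 1) * n.choose (n / 2) := by
  have hmap : ∀ x ∈ S, colHt n S x ∈ Finset.range (L - 1) := by
    intro x hx
    have := colHt_lt_L hS hx
    exact Finset.mem_range.mpr (by omega)
  rw [Finset.card_eq_sum_card_fiberwise hmap]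
  have hfib : ∀ i ∈ Finset.range (L - 1),
      (S.filter (fun x => colHt n S x = i)).card ≤ n.choose (n / 2) := by
    intro i _
    have hanti : IsAntichain (· ⊆ ·)
        ((S.filter (fun x => colHt n S x = i) : Finset (Finset (Fin n))) : Set (Finset (Fin n))) := by
      intro a ha b hb hne hab
      simp only [Finset.coe_filter, Set.mem_setOf_eq] at ha hb
      have : a ⊂ b := ssubset_of_ne_of_subset hne hab
      have := colHt_lt_of_ssubset ha.1 this
      omega
    have := IsAntichain.sperner hanti
    simpa using this
  calc ∑ i ∈ Finset.range (L - 1), (S.filter (fun x => colHt n S x = i)).card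
      ≤ ∑ _i ∈ Finset.range (L - 1), n.choose (n / 2) := Finset.sum_le_sum hfib
    _ = (L - 1) * n.choose (n / 2) := by rw [Finset.sum_const, Finset.card_range, smul_eq_mul]

theorem stmt18 (n m L : ℕ) (G : Set (List (Fin m))) (hsp : Sparse m G)
    (hL : ∀ f : Finset (Fin n) → Option (Fin m),
      (¬ ∃ l : List (Finset (Fin n) × Fin m), (l.map Prod.fst).Chain' (· ⊂ ·) ∧
          (∀ q ∈ l, f q.1 = some q.2) ∧ l.map Prod.snd ∈ G) →
      ¬ ∃ l : List (Finset (Fin n)), l.Chain' (· ⊂ ·) ∧ l.length = L ∧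
          ∀ x ∈ l, f x ≠ none) :
    (Finset.univ.filter (fun f : Finset (Fin n) → Option (Fin m) =>
        ¬ ∃ l : List (Finset (Fin n) × Fin m), (l.map Prod.fst).Chain' (· ⊂ ·) ∧
          (∀ q ∈ l, f q.1 = some q.2) ∧ l.map Prod.snd ∈ G)).card ≤
      (∑ S ∈ Finset.univ.filter (fun S : Finset (Finset (Fin n)) =>
          ¬ ∃ l : List (Finset (Fin n)), l.Chain' (· ⊂ ·) ∧ l.length = L ∧
            ∀ x ∈ l, x ∈ S),
        (m + 1) ^ S.card) ∧
    (∑ S ∈ Finset.univ.filter (fun S : Finset (Finset (Fin n)) =>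
        ¬ ∃ l : List (Finset (Fin n)), l.Chain' (· ⊂ ·) ∧ l.length = L ∧
          ∀ x ∈ l, x ∈ S),
      (m + 1) ^ S.card) ≤ 2 ^ (2 ^ n) * (m + 1) ^ ((L - 1) * n.choose (n / 2)) := by
  set P : (Finset (Fin n) → Option (Fin m)) → Prop := fun f =>
    ¬ ∃ l : List (Finset (Fin n) × Fin m), (l.map Prod.fst).Chain' (· ⊂ ·) ∧
        (∀ q ∈ l, f q.1 = some q.2) ∧ l.map Prod.snd ∈ G with hP
  set Q : Finset (Finset (Fin n)) → Prop := fun S =>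
    ¬ ∃ l : List (Finset (Fin n)), l.Chain' (· ⊂ ·) ∧ l.length = L ∧ ∀ x ∈ l, x ∈ S with hQ
  constructor
  · -- part 1
    have hmap : ∀ f ∈ Finset.univ.filter P,
        (Finset.univ.filter (fun x => f x ≠ none)) ∈ Finset.univ.filter Q := by
      intro f hf
      simp only [Finset.mem_filter, Finset.mem_univ, true_and] at hf ⊢
      have := hL f hf
      simpa [hQ] using this
    rw [Finset.card_eq_sum_card_fiberwise hmap]
    apply Finset.sum_le_sum
    intro S hS
    -- fiber bound
    have : ((Finset.univ.filter P).filter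
        (fun f => Finset.univ.filter (fun x => f x ≠ none) = S)).card ≤
        Fintype.card ({a // a ∈ S} → Option (Fin m)) := by
      rw [← Finset.card_univ]
      apply Finset.card_le_card_of_injOn (fun f (y : {a // a ∈ S}) => f y.1)
        (fun _ _ => Finset.mem_univ _)
      intro f1 hf1 f2 hf2 heq
      simp only [Finset.coe_filter, Set.mem_setOf_eq] at hf1 hf2
      funext x
      by_cases hx : x ∈ S
      · exact congrFun heq ⟨x, hx⟩
      · have h1 : f1 x = none := by
          by_contra h
          exact hx (hf1.2 ▸ Finset.mem_filter.mpr ⟨Finset.mem_univ x, h⟩)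
        have h2 : f2 x = none := by
          by_contra h
          exact hx (hf2.2 ▸ Finset.mem_filter.mpr ⟨Finset.mem_univ x, h⟩)
        rw [h1, h2]

    calc _ ≤ Fintype.card ({a // a ∈ S} → Option (Fin m)) := this
      _ = (m + 1) ^ S.card := by
          rw [Fintype.card_fun, Fintype.card_option, Fintype.card_fin, Fintype.card_coe]
  · -- part 2
    have hterm : ∀ S ∈ Finset.univ.filter Q,
        (m + 1) ^ S.card ≤ (m + 1) ^ ((L - 1) * n.choose (n / 2)) := by
      intro S hS
      simp only [Finset.mem_filter, Finset.mem_univ, true_and, hQ] at hS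
      exact Nat.pow_le_pow_right (Nat.succ_le_succ (Nat.zero_le m)) (mirsky_sperner hS)
    calc ∑ S ∈ Finset.univ.filter Q, (m + 1) ^ S.card
        ≤ ∑ _S ∈ Finset.univ.filter Q, (m + 1) ^ ((L - 1) * n.choose (n / 2)) :=
          Finset.sum_le_sum hterm
      _ = (Finset.univ.filter Q).card * (m + 1) ^ ((L - 1) * n.choose (n / 2)) := by
          rw [Finset.sum_const, smul_eq_mul]
      _ ≤ 2 ^ (2 ^ n) * (m + 1) ^ ((L - 1) * n.choose (n / 2)) := by
          apply Nat.mul_le_mul_right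
          calc (Finset.univ.filter Q).card ≤ (Finset.univ : Finset (Finset (Finset (Fin n)))).card :=
                Finset.card_filter_le _ _
            _ = 2 ^ (2 ^ n) := by
                rw [Finset.card_univ, Fintype.card_finset, Fintype.card_finset, Fintype.card_fin]
end
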